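/- arXiv:1004.2797 — 3 statements merged into one kernel-verified Lean document; each statement's English description precedes it below -/
import Mathlib

section
/- If a smooth cubic surface over a field K has a point defined over a separable quadratic extension of K, then it has a K-rational point. -/
open MvPolynomial

private lemma aux_ext2 {d e : Fin 2 →₀ ℕ} (h0 : d 0 = e 0) (h1 : d 1 = e 1) : d = e := by
  ext i
  fin_cases i
  · exact h0
  · exact h1

private lemma aux_degree_fin2 (d : Fin 2 →₀ ℕ) : d.degree = d 0 + d 1 := by
  rw [Finsupp.degree_apply,
    Finset.sum_subset (Finset.subset_univ _)
      (fun i _ hi => Finsupp.notMem_support_iff.mp hi),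
    Fin.sum_univ_two]

private lemma aux_eval_smul {R σ' : Type*} [CommSemiring R] [Fintype σ']
    {φ : MvPolynomial σ' R} {n : ℕ} (h : φ.IsHomogeneous n) (c : R) (y : σ' → R) :
    eval (fun i => c * y i) φ = c ^ n * eval y φ := by
  rw [eval_eq', eval_eq', Finset.mul_sum]
  apply Finset.sum_congr rfl
  intro d hd
  have hdeg : ∑ i, d i = n := by
    have h1 : d.degree = n := by
      by_contra hne
      exact (Finsupp.mem_support_iff.mp hd) (h.coeff_eq_zero hne)
    rw [← h1, Finsupp.degree]
    exact (Finset.sum_subset (Finset.subset_univ _)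
      (fun i _ hi => Finsupp.notMem_support_iff.mp hi)).symm
  calc coeff d φ * ∏ i, (c * y i) ^ d i
      = coeff d φ * ((∏ i, c ^ d i) * ∏ i, y i ^ d i) := by
        rw [← Finset.prod_mul_distrib]
        simp [mul_pow]
    _ = c ^ n * (coeff d φ * ∏ i, y i ^ d i) := by
        rw [Finset.prod_pow_eq_pow_sum, hdeg]; ring

/-- If a smooth cubic surface `X ⊂ ℙ³_K` (given by a nonzero homogeneous cubic
form `F`, smooth in the sense that the partial derivatives of `F` have no common
nontrivial zero over an algebraic closure) has a point over a separable
quadratic extension `L/K`, then it has a `K`-rational point. -/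
theorem smooth_cubic_surface_point_of_quadratic_point
    (K L : Type*) [Field K] [Field L] [Algebra K L] [Algebra.IsSeparable K L]
    (hquad : Module.finrank K L = 2)
    (F : MvPolynomial (Fin 4) K) (hF : F ≠ 0) (hhom : F.IsHomogeneous 3)
    (hsmooth : ∀ x : Fin 4 → AlgebraicClosure K, x ≠ 0 →
      ¬ (∀ i : Fin 4, MvPolynomial.eval x
        (MvPolynomial.pderiv i (F.map (algebraMap K (AlgebraicClosure K)))) = 0))
    (hL : ∃ x : Fin 4 → L, x ≠ 0 ∧ MvPolynomial.eval x (F.map (algebraMap K L)) = 0) :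
    ∃ x : Fin 4 → K, x ≠ 0 ∧ MvPolynomial.eval x F = 0 := by
  classical
  have hfd : FiniteDimensional K L := FiniteDimensional.of_finrank_pos (by omega)
  -- the extension is normal, hence Galois
  have hnormal : Normal K L := by
    rw [normal_iff]
    intro a
    have hint : IsIntegral K a := IsIntegral.of_finite K a
    refine ⟨hint, ?_⟩
    have hp0 : minpoly K a ≠ 0 := minpoly.ne_zero hint
    have hP0 : (minpoly K a).map (algebraMap K L) ≠ 0 := Polynomial.map_ne_zero hp0
    have hroot : ((minpoly K a).map (algebraMap K L)).IsRoot a := by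
      rw [Polynomial.IsRoot, Polynomial.eval_map, ← Polynomial.aeval_def]
      exact minpoly.aeval K a
    obtain ⟨q, hq⟩ := (Polynomial.dvd_iff_isRoot).mpr hroot
    rw [hq]
    have hq0 : q ≠ 0 := fun h => hP0 (by rw [hq, h, mul_zero])
    have hdeg : q.natDegree ≤ 1 := by
      have h1 : ((minpoly K a).map (algebraMap K L)).natDegree = 1 + q.natDegree := by
        rw [hq, Polynomial.natDegree_mul (Polynomial.X_sub_C_ne_zero a) hq0,
          Polynomial.natDegree_X_sub_C]
      have h2 : ((minpoly K a).map (algebraMap K L)).natDegree ≤ 2 := by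
        rw [Polynomial.natDegree_map]
        exact hquad ▸ minpoly.natDegree_le a
      omega
    exact (Polynomial.Splits.X_sub_C _).mul
      (Polynomial.Splits.of_natDegree_le_one hdeg)
  have hgal : IsGalois K L := ⟨⟩
  have hcard : Fintype.card (L ≃ₐ[K] L) = 2 := by
    rw [← Nat.card_eq_fintype_card, IsGalois.card_aut_eq_finrank, hquad]
  -- the nontrivial automorphism σ
  obtain ⟨σ, hσ1⟩ : ∃ σ : L ≃ₐ[K] L, σ ≠ 1 :=
    Fintype.exists_ne_of_one_lt_card (by omega) (1 : L ≃ₐ[K] L)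
  have huniv : ∀ g : L ≃ₐ[K] L, g = 1 ∨ g = σ := by
    intro g
    have h1 : (1 : L ≃ₐ[K] L) ∉ ({σ} : Finset (L ≃ₐ[K] L)) := by
      simp only [Finset.mem_singleton]
      exact fun h => hσ1 h.symm
    have huniv' : ({1, σ} : Finset (L ≃ₐ[K] L)) = Finset.univ := by
      apply Finset.eq_univ_of_card
      rw [Finset.card_insert_of_notMem h1, Finset.card_singleton, hcard]
    have hg : g ∈ ({1, σ} : Finset (L ≃ₐ[K] L)) := huniv' ▸ Finset.mem_univ g
    simpa using hg
  have hσσ : ∀ a : L, σ (σ a) = a := by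
    intro a
    rcases huniv (σ * σ) with h | h
    · have h2 : (σ * σ) a = (1 : L ≃ₐ[K] L) a := by rw [h]
      simpa using h2
    · exact absurd (mul_left_cancel (show σ * σ = σ * 1 by rw [h, mul_one])) hσ1
  -- fixed points are in K
  have hfix : ∀ a : L, σ a = a → ∃ k : K, algebraMap K L k = a := by
    intro a ha
    have hmem : a ∈ IntermediateField.fixedField (⊤ : Subgroup (L ≃ₐ[K] L)) := by
      rintro ⟨g, -⟩
      rcases huniv g with h | h <;> subst h
      · rfl
      · exact ha
    have heq : IntermediateField.fixedField (⊤ : Subgroup (L ≃ₐ[K] L)) =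
        (⊥ : IntermediateField K L) := by
      rw [← IntermediateField.fixingSubgroup_bot, IsGalois.fixedField_fixingSubgroup]
    rw [heq, IntermediateField.mem_bot] at hmem
    obtain ⟨k, hk⟩ := hmem
    exact ⟨k, hk⟩
  -- conjugation commutes with evaluation
  have hconj : ∀ y : Fin 4 → L,
      σ (eval y (F.map (algebraMap K L))) =
        eval (fun j => σ (y j)) (F.map (algebraMap K L)) := by
    intro y
    rw [eval_map, eval_map]
    have h := MvPolynomial.eval₂_comp_left (σ.toAlgHom.toRingHom) (algebraMap K L) y F
    have h2 : (σ.toAlgHom.toRingHom).comp (algebraMap K L) = algebraMap K L := by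
      ext k; exact σ.commutes k
    rw [h2] at h
    exact h
  -- descent : a σ-semistable zero gives a K-rational zero
  have descent : ∀ y : Fin 4 → L, y ≠ 0 →
      eval y (F.map (algebraMap K L)) = 0 →
      (∀ i j, σ (y i) * y j = σ (y j) * y i) →
      ∃ x : Fin 4 → K, x ≠ 0 ∧ eval x F = 0 := by
    intro y hy0 hyF hycross
    obtain ⟨i, hi⟩ : ∃ i, y i ≠ 0 := by
      by_contra h
      push_neg at h
      exact hy0 (funext h)
    set z : Fin 4 → L := fun j => (y i)⁻¹ * y j with hz
    have hσi : σ (y i) ≠ 0 := by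
      intro h
      apply hi
      have h2 := congrArg σ.symm h
      simpa using h2
    have hzfix : ∀ j, σ (z j) = z j := by
      intro j
      have h1 : σ (z j) = (σ (y i))⁻¹ * σ (y j) := by
        rw [hz]; dsimp only; rw [map_mul, map_inv₀]
      rw [h1, hz]; dsimp only
      field_simp
      linear_combination hycross j i
    choose w hw using fun j => hfix (z j) (hzfix j)
    refine ⟨w, ?_, ?_⟩
    · intro h
      have h1 : z i = 1 := inv_mul_cancel₀ hi
      have h2 : (1 : L) = 0 := by rw [← h1, ← hw i, congrFun h i, Pi.zero_apply, map_zero]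
      exact one_ne_zero h2
    · have hzF : eval z (F.map (algebraMap K L)) = 0 := by
        have h := aux_eval_smul (hhom.map (algebraMap K L)) ((y i)⁻¹) y
        rw [hyF, mul_zero] at h
        exact h
      have htr : algebraMap K L (eval w F) = eval z (F.map (algebraMap K L)) := by
        have h1 := MvPolynomial.eval₂_comp_left (algebraMap K L) (RingHom.id K) w F
        rw [MvPolynomial.eval₂_id, RingHom.comp_id] at h1
        rw [h1, MvPolynomial.eval_map]
        congr 1
        funext j
        exact hw j
      have h0 : algebraMap K L (eval w F) = 0 := by rw [htr, hzF]
      exact (map_eq_zero_iff _ (algebraMap K L).injective).mp h0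
  -- main argument
  obtain ⟨x, hx0, hxF⟩ := hL
  by_cases hprop : ∀ i j, σ (x i) * x j = σ (x j) * x i
  · exact descent x hx0 hxF hprop
  push_neg at hprop
  obtain ⟨i, j, hij⟩ := hprop
  set xb : Fin 4 → L := fun k => σ (x k) with hxb
  have hxbF : eval xb (F.map (algebraMap K L)) = 0 := by
    rw [← hconj, hxF, map_zero]
  -- the restriction of F to the line through x and xb, as a binary form G
  set gf : Fin 4 → MvPolynomial (Fin 2) L :=
    fun k => C (x k) * X 0 + C (xb k) * X 1 with hgf
  set G : MvPolynomial (Fin 2) L :=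
    eval₂ (C.comp (algebraMap K L)) gf F with hGdef
  have hG : G.IsHomogeneous 3 := by
    have h := hhom.eval₂ (C.comp (algebraMap K L)) gf
      (fun r => isHomogeneous_C _ _)
      (fun k => ((isHomogeneous_C_mul_X (x k) 0).add (isHomogeneous_C_mul_X (xb k) 1)))
    simpa using h
  have hGdeg : ∀ d ∈ G.support, d 0 + d 1 = 3 := by
    intro d hd
    by_contra h
    exact MvPolynomial.mem_support_iff.mp hd
      (hG.coeff_eq_zero (by rw [aux_degree_fin2]; omega))
  -- transfer of evaluation
  have htrans : ∀ t s : L,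
      eval (fun k => x k * t + xb k * s) (F.map (algebraMap K L)) = eval ![t, s] G := by
    intro t s
    rw [hGdef, MvPolynomial.eval_eval₂]
    rw [eval_map]
    have hc : ((eval ![t, s]).comp (C.comp (algebraMap K L))) = algebraMap K L := by
      ext r; simp
    rw [hc]
    congr 1
    funext k
    simp [hgf]
  -- coefficients of G
  set m30 : Fin 2 →₀ ℕ := Finsupp.single 0 3 with hm30
  set m03 : Fin 2 →₀ ℕ := Finsupp.single 1 3 with hm03
  set m21 : Fin 2 →₀ ℕ := Finsupp.single 0 2 + Finsupp.single 1 1 with hm21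
  set m12 : Fin 2 →₀ ℕ := Finsupp.single 0 1 + Finsupp.single 1 2 with hm12
  have hm30v : m30 0 = 3 ∧ m30 1 = 0 := by constructor <;> simp [hm30]
  have hm03v : m03 0 = 0 ∧ m03 1 = 3 := by constructor <;> simp [hm03]
  have hm21v : m21 0 = 2 ∧ m21 1 = 1 := by constructor <;> simp [hm21, Finsupp.single_apply]
  have hm12v : m12 0 = 1 ∧ m12 1 = 2 := by constructor <;> simp [hm12, Finsupp.single_apply]
  -- the coefficient of t^3 vanishes
  have h30 : coeff m30 G = 0 := by
    have hev : eval ![(1 : L), 0] G = 0 := by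
      rw [← htrans 1 0]
      have hfun : (fun k => x k * 1 + xb k * 0) = x := by funext k; ring
      rw [hfun, hxF]
    rw [eval_eq'] at hev
    have hsum : (∑ d ∈ G.support, coeff d G * ∏ i2, ![(1 : L), 0] i2 ^ d i2)
        = coeff m30 G * ∏ i2, ![(1 : L), 0] i2 ^ m30 i2 := by
      apply Finset.sum_eq_single
      · intro d hd hne
        rcases Nat.eq_zero_or_pos (d 1) with h1 | h1
        · exact absurd (aux_ext2 (by rw [hm30v.1]; have := hGdeg d hd; omega)
            (by rw [hm30v.2]; omega)) hne
        · have hzero : (![(1 : L), 0] 1) ^ d 1 = 0 := by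
            simp [zero_pow (by omega : d 1 ≠ 0)]
          rw [Fin.prod_univ_two, hzero, mul_zero, mul_zero]
      · intro h
        rw [MvPolynomial.notMem_support_iff.mp h, zero_mul]
    rw [hsum, Fin.prod_univ_two, hm30v.1, hm30v.2] at hev
    simpa using hev
  -- the coefficient of s^3 vanishes
  have h03 : coeff m03 G = 0 := by
    have hev : eval ![(0 : L), 1] G = 0 := by
      rw [← htrans 0 1]
      have hfun : (fun k => x k * 0 + xb k * 1) = xb := by funext k; ring
      rw [hfun, hxbF]
    rw [eval_eq'] at hev
    have hsum : (∑ d ∈ G.support, coeff d G * ∏ i2, ![(0 : L), 1] i2 ^ d i2)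
        = coeff m03 G * ∏ i2, ![(0 : L), 1] i2 ^ m03 i2 := by
      apply Finset.sum_eq_single
      · intro d hd hne
        rcases Nat.eq_zero_or_pos (d 0) with h1 | h1
        · exact absurd (aux_ext2 (by rw [hm03v.1]; omega)
            (by rw [hm03v.2]; have := hGdeg d hd; omega)) hne
        · have hzero : (![(0 : L), 1] 0) ^ d 0 = 0 := by
            simp [zero_pow (by omega : d 0 ≠ 0)]
          rw [Fin.prod_univ_two, hzero, zero_mul, mul_zero]
      · intro h
        rw [MvPolynomial.notMem_support_iff.mp h, zero_mul]
    rw [hsum, Fin.prod_univ_two, hm03v.1, hm03v.2] at hev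
    simpa using hev
  set b : L := coeff m21 G with hb_def
  set c : L := coeff m12 G with hc_def
  -- the key evaluation formula
  have hkey : ∀ t s : L,
      eval (fun k => x k * t + xb k * s) (F.map (algebraMap K L)) =
        b * (t ^ 2 * s) + c * (t * s ^ 2) := by
    intro t s
    rw [htrans t s, eval_eq']
    have hsub : G.support ⊆ {m21, m12} := by
      intro d hd
      have hdeg := hGdeg d hd
      have hne30 : d ≠ m30 := fun h => MvPolynomial.mem_support_iff.mp hd (h ▸ h30)
      have hne03 : d ≠ m03 := fun h => MvPolynomial.mem_support_iff.mp hd (h ▸ h03)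
      have hcases : (d 0 = 2 ∧ d 1 = 1) ∨ (d 0 = 1 ∧ d 1 = 2) := by
        have h30' : ¬(d 0 = 3 ∧ d 1 = 0) :=
          fun ⟨ha, hb⟩ => hne30 (aux_ext2 (by omega) (by omega))
        have h03' : ¬(d 0 = 0 ∧ d 1 = 3) :=
          fun ⟨ha, hb⟩ => hne03 (aux_ext2 (by omega) (by omega))
        omega
      rcases hcases with ⟨h0, h1⟩ | ⟨h0, h1⟩
      · exact Finset.mem_insert.mpr (Or.inl (aux_ext2 (by omega) (by omega)))
      · exact Finset.mem_insert.mpr (Or.inr (Finset.mem_singleton.mpr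
          (aux_ext2 (by omega) (by omega))))
    rw [Finset.sum_subset hsub (fun d _ hd =>
      by rw [MvPolynomial.notMem_support_iff.mp hd, zero_mul])]
    have hne : m21 ≠ m12 := by
      intro h
      have h0 : m21 0 = m12 0 := by rw [h]
      rw [hm21v.1, hm12v.1] at h0
      omega
    rw [Finset.sum_insert (by simpa using hne), Finset.sum_singleton,
      Fin.prod_univ_two, Fin.prod_univ_two, hm21v.1, hm21v.2, hm12v.1, hm12v.2]
    simp [pow_one, hb_def, hc_def]
  -- conjugation relation between the coefficients : c = σ b
  have hswap : rename (⇑(Equiv.swap (0 : Fin 2) 1))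
      (MvPolynomial.map σ.toAlgHom.toRingHom G) = G := by
    have hhom_eq : ((MvPolynomial.rename (⇑(Equiv.swap (0 : Fin 2) 1))).toRingHom.comp
        ((MvPolynomial.map σ.toAlgHom.toRingHom).comp
          (MvPolynomial.eval₂Hom (C.comp (algebraMap K L)) gf)))
        = MvPolynomial.eval₂Hom (C.comp (algebraMap K L)) gf := by
      apply MvPolynomial.ringHom_ext
      · intro r
        simp [σ.commutes r]
      · intro k
        simp only [RingHom.coe_comp, Function.comp_apply, MvPolynomial.eval₂Hom_X',
          AlgHom.toRingHom_eq_coe, AlgHom.coe_toRingHom, hgf, map_add, map_mul,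
          MvPolynomial.map_C, MvPolynomial.map_X, rename_C, rename_X,
          AlgEquiv.coe_algHom]
        rw [Equiv.swap_apply_left, Equiv.swap_apply_right]
        have h1 : σ (x k) = xb k := rfl
        have h2 : σ (xb k) = x k := hσσ (x k)
        rw [h1, h2]
        ring
    have happ := congrArg
      (fun φ : MvPolynomial (Fin 4) K →+* MvPolynomial (Fin 2) L => φ F) hhom_eq
    rw [hGdef]
    exact happ
  have hcb : c = σ b := by
    have hmap : Finsupp.mapDomain (⇑(Equiv.swap (0 : Fin 2) 1)) m21 = m12 := by
      rw [hm21, Finsupp.mapDomain_add, Finsupp.mapDomain_single, Finsupp.mapDomain_single,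
        Equiv.swap_apply_left, Equiv.swap_apply_right, hm12, add_comm]
    calc c = coeff m12 (rename (⇑(Equiv.swap (0 : Fin 2) 1))
          (MvPolynomial.map σ.toAlgHom.toRingHom G)) := by rw [hswap]
      _ = coeff m21 (MvPolynomial.map σ.toAlgHom.toRingHom G) := by
          rw [← hmap]
          exact MvPolynomial.coeff_rename_mapDomain _ (Equiv.injective _) _ _
      _ = σ b := by rw [MvPolynomial.coeff_map]; rfl
  -- now finish by cases on b
  by_cases hb : b = 0
  · -- the whole line lies in the cubic; take the K-rational point x + σ(x)
    have hc : c = 0 := by rw [hcb, hb, map_zero]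
    have hfix' : ∀ k, σ (x k + xb k) = x k + xb k := by
      intro k
      rw [map_add]
      have : σ (xb k) = x k := hσσ (x k)
      rw [this]
      have : σ (x k) = xb k := rfl
      rw [this, add_comm]
    refine descent (fun k => x k + xb k) ?_ ?_ ?_
    · intro h
      apply hij
      have e : ∀ k, xb k = -x k := by
        intro k
        have := congrFun h k
        dsimp at this
        linear_combination this
      show σ (x i) * x j = σ (x j) * x i
      have ei : σ (x i) = xb i := rfl
      have ej : σ (x j) = xb j := rfl
      rw [ei, ej, e i, e j]
      ring
    · have hfun : (fun k => x k + xb k) = (fun k => x k * 1 + xb k * 1) := by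
        funext k; ring
      rw [hfun, hkey 1 1, hb, hc]
      ring
    · intro i' j'
      rw [hfix' i', hfix' j']
      ring
  · -- the third intersection point of the line with the cubic
    have hneg : ∀ k, σ (x k * σ b + xb k * (-b)) = -(x k * σ b + xb k * (-b)) := by
      intro k
      rw [map_add, map_mul, map_mul, map_neg]
      have h1 : σ (x k) = xb k := rfl
      have h2 : σ (xb k) = x k := hσσ (x k)
      have h3 : σ (σ b) = b := hσσ b
      rw [h1, h2, h3]
      ring
    refine descent (fun k => x k * σ b + xb k * (-b)) ?_ ?_ ?_
    · intro h
      apply hij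
      have e : ∀ k, xb k * b = x k * σ b := by
        intro k
        have := congrFun h k
        dsimp at this
        linear_combination -this
      show σ (x i) * x j = σ (x j) * x i
      have ei : σ (x i) = xb i := rfl
      have ej : σ (x j) = xb j := rfl
      rw [ei, ej]
      apply mul_left_cancel₀ hb
      linear_combination x j * e i - x i * e j
    · rw [hkey (σ b) (-b), hcb]
      ring
    · intro i' j'
      rw [hneg i', hneg j']
      ring
end

section
/- If a smooth cubic surface over a field K has a point defined over a field obtained from K by a finite tower of separable quadratic extensions, then X has a K-rational point. -/
open Module

section NormalLemma
open Polynomial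

lemma myNormal_of_finrank_two (Kp L : Type*) [Field Kp] [Field L] [Algebra Kp L]
    (h2 : finrank Kp L = 2) : Normal Kp L := by
  have hfd : FiniteDimensional Kp L := .of_finrank_pos (by omega)
  refine normal_iff.2 fun x => ?_
  have hint : IsIntegral Kp x := .of_finite _ _
  refine ⟨hint, ?_⟩
  set p := (minpoly Kp x).map (algebraMap Kp L) with hp
  have hdeg : p.natDegree ≤ 2 := by
    rw [hp, natDegree_map]
    exact h2 ▸ minpoly.natDegree_le x
  have hroot : p.IsRoot x := by
    rw [hp, IsRoot, eval_map, ← aeval_def, minpoly.aeval]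
  obtain ⟨q, hq⟩ := (dvd_iff_isRoot).2 hroot
  rw [hq]
  rcases eq_or_ne q 0 with h0 | h0
  · simp [h0]
  have : q.natDegree ≤ 1 := by
    have := natDegree_mul (X_sub_C_ne_zero x) h0
    rw [← hq, natDegree_X_sub_C] at this
    omega
  exact (Splits.X_sub_C _).mul (Splits.of_natDegree_le_one this)

end NormalLemma

lemma myExists_sigma (Kp L : Type*) [Field Kp] [Field L] [Algebra Kp L]
    [Algebra.IsSeparable Kp L] (h2 : finrank Kp L = 2) :
    ∃ σ : L ≃ₐ[Kp] L, (∀ z, σ (σ z) = z) ∧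
      (∀ z : L, σ z = z → z ∈ (algebraMap Kp L).range) := by
  have hfd : FiniteDimensional Kp L := .of_finrank_pos (by omega)
  have hnormal : Normal Kp L := myNormal_of_finrank_two Kp L h2
  have hgal : IsGalois Kp L := ⟨⟩
  have hcard : Fintype.card (L ≃ₐ[Kp] L) = 2 := by
    rw [← Nat.card_eq_fintype_card, IsGalois.card_aut_eq_finrank, h2]
  classical
  obtain ⟨σ, hσ1⟩ := Fintype.exists_ne_of_one_lt_card (by omega) (1 : L ≃ₐ[Kp] L)
  have hσσ : σ * σ = 1 := by
    have := pow_card_eq_one (G := L ≃ₐ[Kp] L) (x := σ)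
    rwa [hcard, pow_two] at this
  have hall : ∀ g : L ≃ₐ[Kp] L, g = 1 ∨ g = σ := by
    intro g
    by_contra hg
    push_neg at hg
    have : ({1, σ, g} : Finset (L ≃ₐ[Kp] L)).card = 3 := by
      rw [Finset.card_insert_of_notMem (by simp [hσ1.symm, Ne.symm hg.1, Ne.symm hg.2]),
        Finset.card_insert_of_notMem (by simp [Ne.symm hg.2]), Finset.card_singleton]
    have hle := Finset.card_le_card (Finset.subset_univ ({1, σ, g} : Finset (L ≃ₐ[Kp] L)))
    rw [this, Finset.card_univ, hcard] at hle
    omega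
  refine ⟨σ, fun z => ?_, fun z hz => ?_⟩
  · have := DFunLike.congr_fun hσσ z
    simpa using this
  · have hmem : z ∈ IntermediateField.fixedField (⊤ : Subgroup (L ≃ₐ[Kp] L)) := by
      rintro ⟨g, -⟩
      rcases hall g with rfl | rfl
      · rfl
      · exact hz
    have hbot := ((IsGalois.tfae (F := Kp) (E := L)).out 0 1).1 hgal
    rw [hbot] at hmem
    rwa [IntermediateField.mem_bot] at hmem

open MvPolynomial in
lemma myEval₂_smul {R S τ : Type*} [CommSemiring R] [CommSemiring S] (f : R →+* S)
    {m : ℕ} {P : MvPolynomial τ R} (hP : P.IsHomogeneous m) (c : S) (g : τ → S) :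
    MvPolynomial.eval₂ f (fun i => c * g i) P = c ^ m * MvPolynomial.eval₂ f g P := by
  rw [eval₂_eq, eval₂_eq, Finset.mul_sum]
  apply Finset.sum_congr rfl
  intro d hd
  have hdeg : d.degree = m := by
    by_contra h
    exact (MvPolynomial.mem_support_iff.1 hd) (hP.coeff_eq_zero h)
  have : ∏ i ∈ d.support, (c * g i) ^ d i
      = c ^ m * ∏ i ∈ d.support, g i ^ d i := by
    rw [← hdeg, Finsupp.degree_apply, ← Finset.prod_pow_eq_pow_sum, ← Finset.prod_mul_distrib]
    exact Finset.prod_congr rfl fun i _ => mul_pow _ _ _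
  rw [this]
  ring

/-- the exponent finsupp `X0^a X1^b` -/
noncomputable def myE (a b : ℕ) : Fin 2 →₀ ℕ := Finsupp.single 0 a + Finsupp.single 1 b

lemma myE_apply0 (a b : ℕ) : myE a b 0 = a := by simp [myE, Finsupp.single_apply]
lemma myE_apply1 (a b : ℕ) : myE a b 1 = b := by simp [myE, Finsupp.single_apply]

lemma myE_ne {a b a' b' : ℕ} (h : a ≠ a') : myE a b ≠ myE a' b' := fun hh => by
  have := DFunLike.congr_fun hh 0
  rw [myE_apply0, myE_apply0] at this
  exact h this

open MvPolynomial Finsupp in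
lemma myBinaryCubic {S : Type*} [CommRing S] (G : MvPolynomial (Fin 2) S)
    (hG : G.IsHomogeneous 3) (s t : S) :
    eval ![s, t] G =
      G.coeff (myE 3 0) * s ^ 3
      + G.coeff (myE 2 1) * s ^ 2 * t
      + G.coeff (myE 1 2) * s * t ^ 2
      + G.coeff (myE 0 3) * t ^ 3 := by
  classical
  have hdsum : ∀ d : Fin 2 →₀ ℕ, d.degree = d 0 + d 1 := by
    intro d
    rw [Finsupp.degree_apply]
    rw [Finset.sum_subset (Finset.subset_univ d.support)
      (fun i _ hi => by simpa using Finsupp.notMem_support_iff.1 hi)]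
    exact Fin.sum_univ_two d
  have hclass : ∀ d : Fin 2 →₀ ℕ, d ∈ G.support → d ∈ ({myE 3 0, myE 2 1, myE 1 2, myE 0 3} :
      Finset (Fin 2 →₀ ℕ)) := by
    intro d hd
    have hdeg : d.degree = 3 := by
      by_contra h
      exact (MvPolynomial.mem_support_iff.1 hd) (hG.coeff_eq_zero h)
    rw [hdsum d] at hdeg
    have hd' : d = myE (d 0) (d 1) := by
      ext i
      match i with
      | 0 => rw [myE_apply0]
      | 1 => rw [myE_apply1]
    have hcases : (d 0 = 3 ∧ d 1 = 0) ∨ (d 0 = 2 ∧ d 1 = 1) ∨ (d 0 = 1 ∧ d 1 = 2)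
        ∨ (d 0 = 0 ∧ d 1 = 3) := by omega
    rcases hcases with ⟨h0, h1⟩ | ⟨h0, h1⟩ | ⟨h0, h1⟩ | ⟨h0, h1⟩ <;>
      · rw [hd', h0, h1]
        simp [Finset.mem_insert]
  have heval : eval ![s, t] G = ∑ d ∈ ({myE 3 0, myE 2 1, myE 1 2, myE 0 3} :
      Finset (Fin 2 →₀ ℕ)), G.coeff d * ∏ i, (![s, t] : Fin 2 → S) i ^ d i := by
    rw [eval_eq']
    exact Finset.sum_subset hclass (fun d _ hd => by
      rw [MvPolynomial.notMem_support_iff.1 hd, zero_mul])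
  rw [heval]
  have hprod : ∀ a b : ℕ, ∏ i, (![s, t] : Fin 2 → S) i ^ (myE a b) i = s ^ a * t ^ b := by
    intro a b
    rw [Fin.prod_univ_two, myE_apply0, myE_apply1]
    simp
  rw [Finset.sum_insert (by
      simp only [Finset.mem_insert, Finset.mem_singleton]
      push_neg
      exact ⟨myE_ne (by norm_num), myE_ne (by norm_num), myE_ne (by norm_num)⟩),
    Finset.sum_insert (by
      simp only [Finset.mem_insert, Finset.mem_singleton]
      push_neg
      exact ⟨myE_ne (by norm_num), myE_ne (by norm_num)⟩),
    Finset.sum_insert (by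
      simp only [Finset.mem_singleton]
      exact myE_ne (by norm_num)),
    Finset.sum_singleton, hprod, hprod, hprod, hprod]
  ring

section StepLemma
open MvPolynomial

lemma myStep (Kp L : Type*) [Field Kp] [Field L] [Algebra Kp L] [Algebra.IsSeparable Kp L]
    (h2 : finrank Kp L = 2) (P : MvPolynomial (Fin 4) Kp) (hhom : P.IsHomogeneous 3)
    (x : Fin 4 → L) (hx : x ≠ 0)
    (hev : MvPolynomial.eval₂ (algebraMap Kp L) x P = 0) :
    ∃ y : Fin 4 → Kp, y ≠ 0 ∧ MvPolynomial.eval y P = 0 := by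
  obtain ⟨σ, hσ2, hfix⟩ := myExists_sigma Kp L h2
  have hKinj : Function.Injective (algebraMap Kp L) := (algebraMap Kp L).injective
  -- descent from a σ-semi-invariant point
  have descend : ∀ w : Fin 4 → L, w ≠ 0 → eval₂ (algebraMap Kp L) w P = 0 →
      (∃ μ : L, ∀ j, σ (w j) = μ * w j) → ∃ y : Fin 4 → Kp, y ≠ 0 ∧ eval y P = 0 := by
    rintro w hw hevw ⟨μ, hμ⟩
    obtain ⟨j₀, hj₀⟩ : ∃ j₀, w j₀ ≠ 0 := by
      by_contra h
      push_neg at h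
      exact hw (funext h)
    have hz : ∀ i, ∃ z : Kp, algebraMap Kp L z = w i * (w j₀)⁻¹ := by
      intro i
      have hfixi : σ (w i * (w j₀)⁻¹) = w i * (w j₀)⁻¹ := by
        have hμ0 : μ ≠ 0 := by
          intro h
          apply hj₀
          apply σ.injective
          rw [hμ j₀, h, zero_mul, map_zero]
        rw [map_mul, map_inv₀, hμ i, hμ j₀, mul_inv]
        field_simp
      obtain ⟨z, hzz⟩ := hfix _ hfixi
      exact ⟨z, hzz⟩
    choose z hz using hz
    have hz0 : z j₀ ≠ 0 := by
      intro h0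
      have h1 : algebraMap Kp L (z j₀) = 1 := by rw [hz j₀, mul_inv_cancel₀ hj₀]
      rw [h0, map_zero] at h1
      exact zero_ne_one h1
    refine ⟨z, fun h0 => hz0 (by rw [h0]; rfl), ?_⟩
    apply hKinj
    rw [map_zero, ← MvPolynomial.eval₂_id, MvPolynomial.eval₂_comp_left (algebraMap Kp L)]
    have : (algebraMap Kp L) ∘ z = fun i => (w j₀)⁻¹ * w i := by
      funext i
      rw [Function.comp_apply, hz i, mul_comm]
    rw [RingHom.comp_id, this, myEval₂_smul (algebraMap Kp L) hhom, hevw, mul_zero]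
  by_cases hdep : ∃ μ : L, ∀ j, σ (x j) = μ * x j
  · exact descend x hx hev hdep
  -- independence of x and σ ∘ x
  have hind : ∀ s t : L, (∀ j, s * x j + t * σ (x j) = 0) → s = 0 ∧ t = 0 := by
    intro s t h
    by_cases ht : t = 0
    · subst ht
      refine ⟨?_, rfl⟩
      by_contra hs
      apply hx
      funext j
      have := h j
      rw [zero_mul, add_zero] at this
      exact (mul_eq_zero.1 this).resolve_left hs
    · exfalso
      apply hdep
      refine ⟨t⁻¹ * (-s), fun j => ?_⟩
      have h1 : t * σ (x j) = -s * x j := by linear_combination h j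
      calc σ (x j) = t⁻¹ * (t * σ (x j)) := by field_simp
        _ = t⁻¹ * (-s * x j) := by rw [h1]
        _ = t⁻¹ * -s * x j := by ring
  -- the conjugate point is also a zero
  have hev2 : eval₂ (algebraMap Kp L) (fun j => σ (x j)) P = 0 := by
    have hcomp : ((σ.toRingEquiv : L →+* L)).comp (algebraMap Kp L) = algebraMap Kp L :=
      RingHom.ext fun r => σ.commutes r
    have h1 := MvPolynomial.eval₂_comp_left ((σ.toRingEquiv : L →+* L)) (algebraMap Kp L) x P
    rw [hev, map_zero, hcomp] at h1
    simpa [Function.comp_def] using h1.symm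
  -- the binary cubic obtained by restricting to the line through x and σ x
  set g : Fin 4 → MvPolynomial (Fin 2) L :=
    fun j => C (x j) * X 0 + C (σ (x j)) * X 1 with hgdef
  set G : MvPolynomial (Fin 2) L :=
    eval₂ (C.comp (algebraMap Kp L)) g P with hGdef
  have hGhom : G.IsHomogeneous 3 := by
    have := MvPolynomial.IsHomogeneous.eval₂ hhom (C.comp (algebraMap Kp L)) g
      (fun r => isHomogeneous_C _ _)
      (fun j => (isHomogeneous_C_mul_X _ _).add (isHomogeneous_C_mul_X _ _))
    simpa using this
  have hGeval : ∀ s t : L, eval ![s, t] G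
      = eval₂ (algebraMap Kp L) (fun j => s * x j + t * σ (x j)) P := by
    intro s t
    rw [hGdef, MvPolynomial.eval₂_comp_left (eval ![s, t]) (C.comp (algebraMap Kp L)) g P]
    congr 1
    · ext r
      simp
    · funext j
      rw [hgdef]
      simp only [Function.comp_apply, map_add, map_mul, eval_C, eval_X]
      simp [mul_comm]
  -- conjugation symmetry of G
  have hswap : MvPolynomial.map (σ.toRingEquiv : L →+* L) G
      = rename (Equiv.swap (0 : Fin 2) 1) G := by
    have h1 := MvPolynomial.eval₂_comp_left
      (MvPolynomial.map (σ.toRingEquiv : L →+* L)) (C.comp (algebraMap Kp L)) g P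
    have h2 := MvPolynomial.eval₂_comp_left
      ((rename (Equiv.swap (0 : Fin 2) 1)).toRingHom) (C.comp (algebraMap Kp L)) g P
    rw [hGdef]
    rw [show MvPolynomial.map (σ.toRingEquiv : L →+* L) (eval₂ (C.comp (algebraMap Kp L)) g P)
      = _ from h1]
    rw [show rename (Equiv.swap (0 : Fin 2) 1) (eval₂ (C.comp (algebraMap Kp L)) g P)
      = _ from h2]
    congr 1
    · ext r
      simp [σ.commutes r]
    · funext j
      rw [hgdef]
      simp only [Function.comp_apply, map_add, map_mul, MvPolynomial.map_C, MvPolynomial.map_X,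
        AlgHom.toRingHom_eq_coe, RingHom.coe_coe, rename_C, rename_X, Equiv.swap_apply_left,
        Equiv.swap_apply_right]
      have hx2 : ∀ z : L, σ.toRingEquiv (σ z) = z := hσ2
      have hx1 : σ.toRingEquiv (x j) = σ (x j) := rfl
      rw [hx2, hx1]
      ring
  -- extract coefficients
  set a := G.coeff (myE 3 0) with hadef
  set b := G.coeff (myE 2 1) with hbdef
  set c := G.coeff (myE 1 2) with hcdef
  set d := G.coeff (myE 0 3) with hddef
  have ha : a = 0 := by
    have h1 := myBinaryCubic G hGhom 1 0
    rw [hGeval 1 0] at h1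
    have h2 : (fun j => 1 * x j + 0 * σ (x j)) = x := by funext j; ring
    rw [h2, hev] at h1
    have := h1.symm
    rw [← hadef, ← hbdef, ← hcdef, ← hddef] at this
    linear_combination this
  have hd : d = 0 := by
    have h1 := myBinaryCubic G hGhom 0 1
    rw [hGeval 0 1] at h1
    have h2 : (fun j => 0 * x j + 1 * σ (x j)) = fun j => σ (x j) := by funext j; ring
    rw [h2, hev2] at h1
    have := h1.symm
    rw [← hadef, ← hbdef, ← hcdef, ← hddef] at this
    linear_combination this
  have hbc : σ b = c := by
    have h1 : σ b = (MvPolynomial.map (σ.toRingEquiv : L →+* L) G).coeff (myE 2 1) := by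
      rw [MvPolynomial.coeff_map]
      rfl
    have hmap : Finsupp.mapDomain (Equiv.swap (0 : Fin 2) 1) (myE 1 2) = myE 2 1 := by
      rw [show myE 1 2 = Finsupp.single (0 : Fin 2) 1 + Finsupp.single 1 2 from rfl,
        Finsupp.mapDomain_add, Finsupp.mapDomain_single, Finsupp.mapDomain_single,
        Equiv.swap_apply_left, Equiv.swap_apply_right]
      rw [show myE 2 1 = Finsupp.single (0 : Fin 2) 2 + Finsupp.single 1 1 from rfl]
      rw [add_comm]
    have h2 : (rename (Equiv.swap (0 : Fin 2) 1) G).coeff (myE 2 1) = c := by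
      rw [← hmap, coeff_rename_mapDomain _ (Equiv.swap (0 : Fin 2) 1).injective]
    rw [h1, hswap, h2]
  have hcb : σ c = b := by rw [← hbc, hσ2]
  by_cases hbczero : b = 0 ∧ c = 0
  · -- the whole line lies on the surface; take the trace point
    have h11 : eval₂ (algebraMap Kp L) (fun j => x j + σ (x j)) P = 0 := by
      have h1 := myBinaryCubic G hGhom 1 1
      rw [hGeval 1 1] at h1
      rw [← hadef, ← hbdef, ← hcdef, ← hddef, ha, hd, hbczero.1, hbczero.2] at h1
      have h2 : (fun j => 1 * x j + 1 * σ (x j)) = fun j => x j + σ (x j) := by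
        funext j; ring
      rw [h2] at h1
      rw [h1]
      ring
    refine descend _ ?_ h11 ⟨1, fun j => by rw [map_add, hσ2]; ring⟩
    intro h0
    have := hind 1 1 (fun j => by
      have := congrFun h0 j
      simpa using this)
    exact one_ne_zero this.1
  · -- the third intersection point of the line with the surface
    set y : Fin 4 → L := fun j => c * x j + (-b) * σ (x j) with hydef
    have hyev : eval₂ (algebraMap Kp L) y P = 0 := by
      rw [← hGeval c (-b), myBinaryCubic G hGhom c (-b),
        ← hadef, ← hbdef, ← hcdef, ← hddef, ha, hd]
      ring
    have hyne : y ≠ 0 := by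
      intro h0
      have := hind c (-b) (fun j => by
        have := congrFun h0 j
        simpa [hydef] using this)
      exact hbczero ⟨neg_eq_zero.1 this.2, this.1⟩
    refine descend y hyne hyev ⟨-1, fun j => ?_⟩
    rw [hydef]
    simp only
    rw [map_add, map_mul, map_mul, map_neg, hσ2, hbc, hcb]
    ring

end StepLemma


/-- The composite of a chain of ring homomorphisms `Ks 0 →+* Ks 1 →+* ⋯ →+* Ks n`. -/
def chainRingHom (Ks : ℕ → Type*) [∀ i, Field (Ks i)]
    (f : ∀ i : ℕ, Ks i →+* Ks (i + 1)) : ∀ n : ℕ, Ks 0 →+* Ks n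
  | 0 => RingHom.id _
  | n + 1 => (f n).comp (chainRingHom Ks f n)

/-- If a smooth cubic surface over a field `K` has a point defined over a field
obtained from `K` by a finite tower of separable quadratic extensions
`K = K₀ ⊂ K₁ ⊂ ⋯ ⊂ Kₙ`, then it has a `K`-rational point. -/
theorem smooth_cubic_surface_point_of_quadratic_tower_point
    (K : Type*) [Field K] (n : ℕ)
    (Ks : ℕ → Type*) [∀ i, Field (Ks i)]
    (e : K ≃+* Ks 0)
    (f : ∀ i : ℕ, Ks i →+* Ks (i + 1))
    (hsep : ∀ i < n, @Algebra.IsSeparable (Ks i) (Ks (i + 1)) _ _ (f i).toAlgebra)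
    (hquad : ∀ i < n, @Module.finrank (Ks i) (Ks (i + 1)) _ _
      (@Algebra.toModule _ _ _ _ (f i).toAlgebra) = 2)
    (F : MvPolynomial (Fin 4) K) (hF : F ≠ 0) (hhom : F.IsHomogeneous 3)
    (hsmooth : ∀ x : Fin 4 → AlgebraicClosure K, x ≠ 0 →
      ¬ (∀ i : Fin 4, MvPolynomial.eval x
        (MvPolynomial.pderiv i (F.map (algebraMap K (AlgebraicClosure K)))) = 0))
    (htop : ∃ x : Fin 4 → Ks n, x ≠ 0 ∧
      MvPolynomial.eval x (F.map ((chainRingHom Ks f n).comp (e : K →+* Ks 0))) = 0) :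
    ∃ x : Fin 4 → K, x ≠ 0 ∧ MvPolynomial.eval x F = 0 := by
  obtain ⟨x, hx0, hxe⟩ := htop
  rw [MvPolynomial.eval_map] at hxe
  suffices H : ∀ m, m ≤ n → ∀ x : Fin 4 → Ks m, x ≠ 0 →
      MvPolynomial.eval₂ ((chainRingHom Ks f m).comp (e : K →+* Ks 0)) x F = 0 →
      ∃ z : Fin 4 → K, z ≠ 0 ∧ MvPolynomial.eval z F = 0 from H n le_rfl x hx0 hxe
  intro m
  induction m with
  | zero =>
    intro _ x hx0 hxe
    have hch : (chainRingHom Ks f 0).comp (e : K →+* Ks 0) = (e : K →+* Ks 0) := by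
      rw [show chainRingHom Ks f 0 = RingHom.id (Ks 0) from rfl, RingHom.id_comp]
    rw [hch] at hxe
    refine ⟨fun i => e.symm (x i), ?_, ?_⟩
    · intro h0
      apply hx0
      funext i
      have h1 : e.symm (x i) = 0 := congrFun h0 i
      have h2 : x i = e (e.symm (x i)) := (e.apply_symm_apply (x i)).symm
      rw [h1, map_zero] at h2
      exact h2
    · apply e.injective
      rw [map_zero]
      have h3 := MvPolynomial.eval₂_comp_left (e : K →+* Ks 0) (RingHom.id K)
        (fun i => e.symm (x i)) F
      rw [MvPolynomial.eval₂_id, RingHom.comp_id] at h3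
      have hcx : ((e : K →+* Ks 0) ∘ fun i => e.symm (x i)) = x := by
        funext i
        exact e.apply_symm_apply (x i)
      rw [hcx] at h3
      exact h3.trans hxe
  | succ m ih =>
    intro hm1 x hx0 hxe
    have hm : m < n := lt_of_lt_of_le (Nat.lt_succ_self m) hm1
    letI : Algebra (Ks m) (Ks (m + 1)) := (f m).toAlgebra
    haveI := hsep m hm
    have hq := hquad m hm
    have hPhom : (F.map ((chainRingHom Ks f m).comp (e : K →+* Ks 0))).IsHomogeneous 3 :=
      hhom.map _
    have hx' : MvPolynomial.eval₂ (algebraMap (Ks m) (Ks (m + 1))) x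
        (F.map ((chainRingHom Ks f m).comp (e : K →+* Ks 0))) = 0 := by
      rw [MvPolynomial.eval₂_map]
      have hcomp : (algebraMap (Ks m) (Ks (m + 1))).comp
          ((chainRingHom Ks f m).comp (e : K →+* Ks 0))
          = (chainRingHom Ks f (m + 1)).comp (e : K →+* Ks 0) := by
        rw [← RingHom.comp_assoc]
        rfl
      rw [hcomp]
      exact hxe
    obtain ⟨y, hy0, hyev⟩ := myStep (Ks m) (Ks (m + 1)) hq _ hPhom x hx0 hx'
    apply ih (le_of_lt (Nat.lt_of_succ_le hm1)) y hy0
    rw [← MvPolynomial.eval_map]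
    exact hyev
end

section
/- Let F be a finite field, K = F(t), and X a smooth cubic surface over K defined by f + t g = 0 with f, g nonproportional cubic forms over F and char F ≠ 3. If the curve Γ : f = g = 0 in P^3_F has a closed point of degree a power of 2, then X has a K-rational point. -/
open MvPolynomial

/-- The cubic form `f + t·g` over `K = F(t)`, an element of `K[X₀,X₁,X₂,X₃]`. -/
noncomputable def pencilForm (F : Type*) [Field F]
    (f g : MvPolynomial (Fin 4) F) : MvPolynomial (Fin 4) (RatFunc F) :=
  MvPolynomial.map (algebraMap F (RatFunc F)) f +
    C RatFunc.X * MvPolynomial.map (algebraMap F (RatFunc F)) g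

namespace CubicPencilAux

variable {R : Type*} [CommRing R]

lemma tri (d : Fin 4 →₀ ℕ) (hd : (Finsupp.weight (1 : Fin 4 → ℕ)) d = 3) :
    ∃ a b c : Fin 4, ∀ (z : Fin 4 → R), (d.prod fun i k => z i ^ k) = z a * z b * z c := by
  have hcard : Multiset.card d.toMultiset = 3 := by
    rw [Finsupp.card_toMultiset, ← hd, Finsupp.weight_apply]
    simp [Finsupp.sum]
  obtain ⟨a, b, c, habc⟩ := Multiset.card_eq_three.mp hcard
  refine ⟨a, b, c, fun z => ?_⟩
  have h1 : (d.toMultiset.map z).prod = d.prod fun i k => z i ^ k := by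
    rw [Finsupp.toMultiset_map, Finsupp.prod_toMultiset]
    exact Finsupp.prod_mapDomain_index (fun a => pow_zero _) (fun a b₁ b₂ => pow_add _ _ _)
  rw [← h1, habc]
  simp [mul_assoc]

lemma bin (φ : MvPolynomial (Fin 4) R) (hh : φ.IsHomogeneous 3) (x y : Fin 4 → R) :
    ∃ c0 c1 c2 c3 : R, ∀ u v : R,
      eval (fun i => u * x i + v * y i) φ =
        c0 * (u * u * u) + c1 * (u * u * v) + c2 * (u * (v * v)) + c3 * (v * (v * v)) := by
  classical
  have hex : ∀ d : Fin 4 →₀ ℕ, ∃ q : R × R × R × R,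
      (Finsupp.weight (1 : Fin 4 → ℕ)) d = 3 → ∀ u v : R,
        (d.prod fun i k => (u * x i + v * y i) ^ k) =
          q.1 * (u*u*u) + q.2.1 * (u*u*v) + q.2.2.1 * (u*(v*v)) + q.2.2.2 * (v*(v*v)) := by
    intro d
    by_cases hd : (Finsupp.weight (1 : Fin 4 → ℕ)) d = 3
    · obtain ⟨a, b, c, hp⟩ := tri (R := R) d hd
      refine ⟨(x a * x b * x c,
               x a * x b * y c + x a * y b * x c + y a * x b * x c,
               x a * y b * y c + y a * x b * y c + y a * y b * x c,
               y a * y b * y c), fun _ u v => ?_⟩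
      rw [hp]
      ring
    · exact ⟨(0, 0, 0, 0), fun h => absurd h hd⟩
  choose E hE using hex
  refine ⟨∑ d ∈ φ.support, coeff d φ * (E d).1,
          ∑ d ∈ φ.support, coeff d φ * (E d).2.1,
          ∑ d ∈ φ.support, coeff d φ * (E d).2.2.1,
          ∑ d ∈ φ.support, coeff d φ * (E d).2.2.2, fun u v => ?_⟩
  conv_lhs => rw [φ.as_sum]
  rw [map_sum]
  have hterm : ∀ d ∈ φ.support,
      eval (fun i => u * x i + v * y i) (monomial d (coeff d φ)) =
        (coeff d φ * (E d).1) * (u*u*u) + (coeff d φ * (E d).2.1) * (u*u*v)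
          + (coeff d φ * (E d).2.2.1) * (u*(v*v)) + (coeff d φ * (E d).2.2.2) * (v*(v*v)) := by
    intro d hd
    rw [eval_monomial, hE d (hh (mem_support_iff.mp hd)) u v]
    ring
  rw [Finset.sum_congr rfl hterm]
  simp only [Finset.sum_add_distrib, ← Finset.sum_mul]

lemma cube (φ : MvPolynomial (Fin 4) R) (hh : φ.IsHomogeneous 3) (x : Fin 4 → R) (r : R) :
    eval (fun i => r * x i) φ = r ^ 3 * eval x φ := by
  obtain ⟨c0, c1, c2, c3, hc⟩ := bin φ hh x 0
  have h1 := hc r 0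
  have h2 := hc 1 0
  simp only [Pi.zero_apply, mul_zero, add_zero, zero_mul, one_mul, mul_one] at h1 h2
  rw [h1, h2]
  ring


lemma secant [IsDomain R] (σ : R →+* R) (hσinj : Function.Injective σ)
    (φ : MvPolynomial (Fin 4) R) (hh : φ.IsHomogeneous 3) (hinv : MvPolynomial.map σ φ = φ)
    (w : R) (hw : σ w = w) (hw0 : w ≠ 0) (hww : w * w ≠ w)
    (A : Fin 4 → R) (hA : A ≠ 0) (hz : eval A φ = 0) (hσ2 : ∀ i, σ (σ (A i)) = A i) :
    ∃ B : Fin 4 → R, B ≠ 0 ∧ eval B φ = 0 ∧ ∀ i, σ (B i) = B i := by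
  set A' : Fin 4 → R := fun i => σ (A i) with hA'
  have evalσ : ∀ z : Fin 4 → R, σ (eval z φ) = eval (fun i => σ (z i)) φ := by
    intro z
    have h1 := eval₂_comp_left σ (RingHom.id R) z φ
    have h2 : eval₂ (RingHom.id R) z φ = eval z φ := rfl
    rw [h2, RingHom.comp_id] at h1
    rw [h1, ← eval_map]
    rw [hinv]
    rfl
  have hz' : eval A' φ = 0 := by
    rw [hA', ← evalσ A, hz, map_zero]
  by_cases hcross : ∀ i j, A i * A' j = A j * A' i
  · obtain ⟨j, hj⟩ : ∃ j, A j ≠ 0 := by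
      by_contra hc
      push_neg at hc
      exact hA (funext hc)
    refine ⟨fun i => A' j * A i, ?_, ?_, ?_⟩
    · intro h0
      have h1 := congrFun h0 j
      simp only [Pi.zero_apply] at h1
      rcases mul_eq_zero.mp h1 with h | h
      · exact hj (hσinj (by rw [show σ (A j) = A' j from rfl, h, map_zero]))
      · exact hj h
    · rw [cube φ hh A (A' j), hz, mul_zero]
    · intro i
      have : σ (A' j * A i) = A j * A' i := by
        rw [map_mul, show σ (A' j) = A j from hσ2 j]
      rw [this, ← hcross i j, mul_comm]
  · push_neg at hcross
    obtain ⟨c0, c1, c2, c3, hbin⟩ := bin φ hh A A'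
    have hc0 : c0 = 0 := by
      have h1 := hbin 1 0
      simp only [one_mul, zero_mul, add_zero, mul_zero, mul_one] at h1
      rw [hz] at h1
      exact h1.symm
    have hc3 : c3 = 0 := by
      have h1 := hbin 0 1
      simp only [one_mul, zero_mul, zero_add, add_zero, mul_zero, mul_one] at h1
      rw [hz'] at h1
      exact h1.symm
    have hrel : ∀ v : R, σ v = v →
        σ c1 * v + σ c2 * (v * v) = c2 * v + c1 * (v * v) := by
      intro v hv
      have h1 := congrArg σ (hbin 1 v)
      rw [evalσ] at h1
      have e1 : (fun i => σ (1 * A i + v * A' i)) = fun i => v * A i + 1 * A' i := by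
        funext i
        rw [map_add, map_mul, map_mul, map_one, hv, show σ (A' i) = A i from hσ2 i,
          show σ (A i) = A' i from rfl]
        ring
      rw [e1, hbin v 1] at h1
      simp only [hc0, hc3, hv, map_add, map_mul, map_zero, zero_mul, map_one, mul_one, one_mul,
        zero_add, add_zero] at h1
      first
      | linear_combination h1
      | linear_combination -h1
    have r1 := hrel w hw
    have r2 := hrel (w * w) (by rw [map_mul, hw])
    have key1 : σ c1 - c2 = w * (c1 - σ c2) := by
      apply mul_left_cancel₀ hw0
      linear_combination r1
    have key2 : σ c1 - c2 = w * w * (c1 - σ c2) := by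
      apply mul_left_cancel₀ (mul_ne_zero hw0 hw0)
      linear_combination r2
    have hc12 : c1 = σ c2 := by
      have hz0 : (w * w - w) * (c1 - σ c2) = 0 := by linear_combination key1 - key2
      rcases mul_eq_zero.mp hz0 with h | h
      · exact absurd (by linear_combination h) hww
      · linear_combination h
    have hc21 : σ c1 = c2 := by
      have : σ c1 - c2 = 0 := by
        rw [key1, show c1 - σ c2 = 0 from by linear_combination hc12]
        exact mul_zero w
      linear_combination this
    by_cases hc2 : c2 = 0
    · have hc1 : c1 = 0 := by rw [hc12, hc2, map_zero]
      refine ⟨fun i => A i + A' i, ?_, ?_, ?_⟩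
      · intro h0
        obtain ⟨i, j, hij⟩ := hcross
        have hi := congrFun h0 i
        have hj := congrFun h0 j
        simp only [Pi.zero_apply] at hi hj
        apply hij
        have hi' : A' i = -A i := by linear_combination hi
        have hj' : A' j = -A j := by linear_combination hj
        rw [hi', hj']
        ring
      · have h1 := hbin 1 1
        simp only [one_mul, mul_one] at h1
        rw [hc0, hc1, hc2, hc3] at h1
        simpa using h1
      · intro i
        rw [map_add, hσ2 i, show σ (A i) = A' i from rfl]
        ring
    · obtain ⟨i0, hne⟩ : ∃ i, A' i ≠ A i := by
        by_contra hc
        push_neg at hc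
        obtain ⟨i, j, hij⟩ := hcross
        apply hij
        rw [hc i, hc j]
        ring
      set μ := A i0 - A' i0 with hμ
      have hμ0 : μ ≠ 0 := sub_ne_zero.mpr (Ne.symm hne)
      have hσμ : σ μ = -μ := by
        rw [hμ, map_sub, show σ (A i0) = A' i0 from rfl, show σ (A' i0) = A i0 from hσ2 i0]
        ring
      refine ⟨fun i => μ * (c2 * A i - c1 * A' i), ?_, ?_, ?_⟩
      · intro h0
        have hB0 : ∀ i, c2 * A i - c1 * A' i = 0 := by
          intro i
          have := congrFun h0 i
          simp only [Pi.zero_apply] at this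
          rcases mul_eq_zero.mp this with h | h
          · exact absurd h hμ0
          · exact h
        obtain ⟨i, j, hij⟩ := hcross
        by_cases hc1 : c1 = 0
        · exact hc2 (by rw [← hc21, hc1, map_zero])
        · apply hij
          have e_i := hB0 i
          have e_j := hB0 j
          have hmain : c1 * c2 * (A i * A' j) = c1 * c2 * (A j * A' i) := by
            linear_combination (c1 * A' j) * e_i - (c1 * A' i) * e_j
          exact mul_left_cancel₀ (mul_ne_zero hc1 hc2) hmain
      · rw [cube φ hh (fun i => c2 * A i - c1 * A' i) μ]
        have h1 := hbin c2 (-c1)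
        have e1 : (fun i => c2 * A i + -c1 * A' i) = fun i => c2 * A i - c1 * A' i := by
          funext i; ring
        rw [e1] at h1
        rw [h1, hc0, hc3]
        ring
      · intro i
        rw [map_mul, hσμ, map_sub, map_mul, map_mul, show σ (A i) = A' i from rfl,
          show σ (A' i) = A i from hσ2 i, hc21, ← hc12]
        ring


lemma fixed_mem_range {F L : Type*} [Field F] [Fintype F] [Field L] [Algebra F L]
    (z : L) (hz : z ^ (Fintype.card F) = z) : z ∈ Set.range (algebraMap F L) := by
  classical
  set q := Fintype.card F with hq
  have hq1 : 1 < q := Fintype.one_lt_card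
  set P : Polynomial L := Polynomial.X ^ q - Polynomial.X with hP
  have hP0 : P ≠ 0 := FiniteField.X_pow_card_sub_X_ne_zero L hq1
  have hPdeg : P.natDegree = q := FiniteField.X_pow_card_sub_X_natDegree_eq L hq1
  have hroot : ∀ a : L, a ^ q = a → a ∈ P.roots.toFinset := by
    intro a ha
    rw [Multiset.mem_toFinset, Polynomial.mem_roots hP0]
    simp [hP, Polynomial.IsRoot, ha]
  set S : Finset L := Finset.univ.image (algebraMap F L) with hS
  have hScard : S.card = q := by
    rw [hS, Finset.card_image_of_injective _ (algebraMap F L).injective, Finset.card_univ]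
  have hSsub : S ⊆ P.roots.toFinset := by
    intro a ha
    rw [hS, Finset.mem_image] at ha
    obtain ⟨b, _, rfl⟩ := ha
    apply hroot
    rw [← map_pow, FiniteField.pow_card]
  by_contra hzr
  have hzS : z ∉ S := by
    intro hzS
    rw [hS, Finset.mem_image] at hzS
    obtain ⟨b, _, rfl⟩ := hzS
    exact hzr ⟨b, rfl⟩
  have hsub2 : insert z S ⊆ P.roots.toFinset := by
    intro a ha
    rcases Finset.mem_insert.mp ha with h | ha
    · rw [h]; exact hroot z hz
    · exact hSsub ha
  have hcard2 : q + 1 ≤ P.roots.toFinset.card := by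
    have := Finset.card_le_card hsub2
    rwa [Finset.card_insert_of_notMem hzS, hScard] at this
  have hcard3 : P.roots.toFinset.card ≤ q := by
    calc P.roots.toFinset.card ≤ Multiset.card P.roots := Multiset.toFinset_card_le _
    _ ≤ P.natDegree := Polynomial.card_roots' P
    _ = q := hPdeg
  omega


lemma isHomogeneous_map {R S : Type*} [CommRing R] [CommRing S] (φ : R →+* S)
    (f : MvPolynomial (Fin 4) R) {n : ℕ} (hf : f.IsHomogeneous n) :
    (MvPolynomial.map φ f).IsHomogeneous n := by
  intro d hd
  rw [coeff_map] at hd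
  exact hf (fun h => hd (by rw [h, map_zero]))


end CubicPencilAux

open CubicPencilAux

/-- Let `F` be a finite field with `char F ≠ 3`, `K = F(t)`, and `X ⊂ ℙ³_K` the
smooth cubic surface defined by `f + t·g = 0` with `f`, `g` nonproportional
cubic forms over `F`. If the curve `Γ : f = g = 0` in `ℙ³_F` has a closed point
of degree a power of 2 (i.e. a nontrivial common zero of `f` and `g` in an
extension of `F` of degree `2^m`), then `X` has a `K`-rational point. -/
theorem cubic_pencil_rational_point_of_two_power_point_on_base_locus
    (F : Type*) [Field F] [Fintype F] (hchar : ringChar F ≠ 3)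
    (f g : MvPolynomial (Fin 4) F)
    (hf : f.IsHomogeneous 3) (hg : g.IsHomogeneous 3)
    (hnonprop : ∀ c : F, g ≠ c • f ∧ f ≠ c • g)
    (hsmooth : ∀ x : Fin 4 → AlgebraicClosure (RatFunc F), x ≠ 0 →
      ¬ (∀ i : Fin 4, eval x (pderiv i ((pencilForm F f g).map
        (algebraMap (RatFunc F) (AlgebraicClosure (RatFunc F))))) = 0))
    (hΓ : ∃ (m : ℕ) (L : IntermediateField F (AlgebraicClosure F)),
      Module.finrank F L = 2 ^ m ∧
      ∃ x : Fin 4 → L, x ≠ 0 ∧ aeval x f = 0 ∧ aeval x g = 0) :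
    ∃ x : Fin 4 → RatFunc F, x ≠ 0 ∧ eval x (pencilForm F f g) = 0 := by
  classical
  obtain ⟨m, L, hrank, x, hx0, hxf, hxg⟩ := hΓ
  haveI : FiniteDimensional F L :=
    FiniteDimensional.of_finrank_pos (by rw [hrank]; positivity)
  haveI : Finite ↥L := Module.finite_of_finite F
  haveI : Fintype ↥L := Fintype.ofFinite ↥L
  set q := Fintype.card F with hq
  have hcardL : Fintype.card ↥L = q ^ 2 ^ m := by
    rw [Module.card_eq_pow_finrank (K := F) (V := ↥L), hrank]
  obtain ⟨p, hp⟩ := CharP.exists F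
  haveI : CharP F p := hp
  obtain ⟨r, hpr, hFr⟩ := FiniteField.card F p
  haveI : CharP ↥L p := charP_of_injective_algebraMap (algebraMap F ↥L).injective p
  haveI : Fact p.Prime := ⟨hpr⟩
  -- Frobenius powers
  set s : ℕ → (↥L →+* ↥L) := fun j => iterateFrobenius ↥L p ((r : ℕ) * 2 ^ j) with hs
  have hs_apply : ∀ j z, s j z = z ^ q ^ 2 ^ j := by
    intro j z
    rw [hs]
    simp only [iterateFrobenius_def]
    rw [hq, hFr, ← pow_mul]
  have hcomp : ∀ j, (s j).comp (s j) = s (j + 1) := by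
    intro j
    ext z
    simp only [RingHom.comp_apply]
    have h2 : 2 ^ j + 2 ^ j = 2 ^ (j + 1) := by
      rw [pow_succ]
      ring
    rw [hs_apply, hs_apply, hs_apply, ← pow_mul, ← pow_add, h2]
  -- the pencil over Polynomial ↥L
  set ι : F →+* Polynomial ↥L :=
    (Polynomial.C : ↥L →+* Polynomial ↥L).comp (algebraMap F ↥L) with hι
  set hL : MvPolynomial (Fin 4) (Polynomial ↥L) :=
    MvPolynomial.map ι f + MvPolynomial.C Polynomial.X * MvPolynomial.map ι g with hhL
  have hLhom : hL.IsHomogeneous 3 := by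
    rw [hhL]
    exact (isHomogeneous_map ι f hf).add
      ((zero_add 3) ▸ (isHomogeneous_C _ _).mul (isHomogeneous_map ι g hg))
  have hιfix : ∀ j : ℕ, (Polynomial.mapRingHom (s j)).comp ι = ι := by
    intro j
    refine RingHom.ext fun a => ?_
    show Polynomial.map (s j) (Polynomial.C (algebraMap F ↥L a)) = _
    rw [Polynomial.map_C, hs_apply, ← map_pow, FiniteField.pow_card_pow]
    rfl
  have hinv : ∀ j, MvPolynomial.map (Polynomial.mapRingHom (s j)) hL = hL := by
    intro j
    rw [hhL, map_add, map_mul, MvPolynomial.map_map, MvPolynomial.map_map, hιfix j,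
      MvPolynomial.map_C]
    have hmx : (Polynomial.mapRingHom (s j)) Polynomial.X = Polynomial.X := Polynomial.map_X _
    rw [hmx]
  have hXX : (Polynomial.X : Polynomial ↥L) * Polynomial.X ≠ Polynomial.X := by
    intro hE
    have h2 := congrArg Polynomial.natDegree hE
    rw [show (Polynomial.X : Polynomial ↥L) * Polynomial.X = Polynomial.X ^ 2 from
      (pow_two _).symm, Polynomial.natDegree_X_pow, Polynomial.natDegree_X] at h2
    omega
  -- the descent
  set Good : ℕ → Prop := fun j => ∃ A : Fin 4 → Polynomial ↥L,
    A ≠ 0 ∧ eval A hL = 0 ∧ ∀ i, Polynomial.map (s j) (A i) = A i with hGood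
  have hstep : ∀ j, Good (j + 1) → Good j := by
    rintro j ⟨A, hA0, hAz, hAfix⟩
    have hσinj : Function.Injective (Polynomial.mapRingHom (s j)) := by
      intro a b hab
      exact Polynomial.map_injective _ (s j).injective hab
    obtain ⟨B, hB0, hBz, hBfix⟩ := secant (Polynomial.mapRingHom (s j)) hσinj hL hLhom
      (hinv j) Polynomial.X (Polynomial.map_X _) Polynomial.X_ne_zero hXX A hA0 hAz
      (by
        intro i
        show Polynomial.map (s j) (Polynomial.map (s j) (A i)) = A i
        rw [Polynomial.map_map, hcomp j]
        exact hAfix i)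
    exact ⟨B, hB0, hBz, fun i => hBfix i⟩
  have hGm : Good m := by
    refine ⟨fun i => Polynomial.C (x i), ?_, ?_, ?_⟩
    · intro h0
      apply hx0
      funext i
      have := congrFun h0 i
      simpa using this
    · rw [hhL, eval_add, eval_mul]
      have ef : eval (fun i => Polynomial.C (x i)) (MvPolynomial.map ι f)
          = Polynomial.C (aeval x f) := by
        rw [eval_map, aeval_def]
        exact (eval₂_comp_left (Polynomial.C : ↥L →+* Polynomial ↥L)
          (algebraMap F ↥L) x f).symm
      have eg : eval (fun i => Polynomial.C (x i)) (MvPolynomial.map ι g)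
          = Polynomial.C (aeval x g) := by
        rw [eval_map, aeval_def]
        exact (eval₂_comp_left (Polynomial.C : ↥L →+* Polynomial ↥L)
          (algebraMap F ↥L) x g).symm
      rw [ef, eg, eval_C, hxf, hxg]
      simp
    · intro i
      rw [Polynomial.map_C, hs_apply, ← hcardL, FiniteField.pow_card]
  have hG0 : Good 0 := by
    have hall : ∀ j, Good j → Good 0 := by
      intro j
      induction j with
      | zero => exact id
      | succ n ih => exact fun hg => ih (hstep n hg)
    exact hall m hGm
  obtain ⟨A, hA0, hAz, hAfix⟩ := hG0
  -- coefficients descend to F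
  have hcoef : ∀ i n, (A i).coeff n ∈ Set.range (algebraMap F ↥L) := by
    intro i n
    apply fixed_mem_range
    have hcc := congrArg (fun P => Polynomial.coeff P n) (hAfix i)
    simp only [Polynomial.coeff_map] at hcc
    rw [hs_apply, pow_zero, pow_one] at hcc
    exact hcc
  have hlift : ∀ i, ∃ Bi : Polynomial F, Polynomial.map (algebraMap F ↥L) Bi = A i := by
    intro i
    exact (Polynomial.mem_lifts (A i)).mp
      ((Polynomial.lifts_iff_coeff_lifts (A i)).mpr (hcoef i))
  choose B hB using hlift
  set ρ : Polynomial F →+* RatFunc F := algebraMap (Polynomial F) (RatFunc F) with hρ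
  have hρC : ρ.comp (Polynomial.C : F →+* Polynomial F) = algebraMap F (RatFunc F) := by
    ext a
    rw [RingHom.comp_apply]
    show algebraMap (Polynomial F) (RatFunc F) (Polynomial.C a) = _
    rw [RatFunc.algebraMap_C, RatFunc.algebraMap_eq_C]
  -- the polynomial identity over F
  set W : Polynomial F := eval₂ (Polynomial.C : F →+* Polynomial F) B f
    + Polynomial.X * eval₂ (Polynomial.C : F →+* Polynomial F) B g with hW
  have hW0 : W = 0 := by
    have hinj : Function.Injective (Polynomial.mapRingHom (algebraMap F ↥L)) := by
      intro a b hab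
      exact Polynomial.map_injective _ (algebraMap F ↥L).injective hab
    apply hinj
    rw [map_zero, hW, map_add, map_mul]
    have t1 : (Polynomial.mapRingHom (algebraMap F ↥L))
        (eval₂ (Polynomial.C : F →+* Polynomial F) B f) = eval₂ ι A f := by
      rw [eval₂_comp_left (Polynomial.mapRingHom (algebraMap F ↥L))
        (Polynomial.C : F →+* Polynomial F) B f]
      congr 1
      · refine RingHom.ext fun a => ?_
        show Polynomial.map (algebraMap F ↥L) (Polynomial.C a) = _
        rw [Polynomial.map_C]
        rfl
      · funext i
        exact hB i
    have t2 : (Polynomial.mapRingHom (algebraMap F ↥L))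
        (eval₂ (Polynomial.C : F →+* Polynomial F) B g) = eval₂ ι A g := by
      rw [eval₂_comp_left (Polynomial.mapRingHom (algebraMap F ↥L))
        (Polynomial.C : F →+* Polynomial F) B g]
      congr 1
      · refine RingHom.ext fun a => ?_
        show Polynomial.map (algebraMap F ↥L) (Polynomial.C a) = _
        rw [Polynomial.map_C]
        rfl
      · funext i
        exact hB i
    have t3 : (Polynomial.mapRingHom (algebraMap F ↥L)) Polynomial.X
        = (Polynomial.X : Polynomial ↥L) := Polynomial.map_X _
    rw [t1, t2, t3]
    have hAz' := hAz
    rw [hhL, eval_add, eval_mul, eval_map, eval_map, eval_C] at hAz'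
    exact hAz'
  refine ⟨fun i => ρ (B i), ?_, ?_⟩
  · intro h0
    obtain ⟨i, hi⟩ : ∃ i, A i ≠ 0 := by
      by_contra hc
      push_neg at hc
      exact hA0 (funext hc)
    apply hi
    rw [← hB i]
    have hBi : B i = 0 := by
      have hci := congrFun h0 i
      simp only [Pi.zero_apply] at hci
      exact RatFunc.algebraMap_injective F (by rw [hci, map_zero])
    rw [hBi, Polynomial.map_zero]
  · rw [pencilForm, eval_add, eval_mul]
    have u1 : eval (fun i => ρ (B i)) (MvPolynomial.map (algebraMap F (RatFunc F)) f)
        = ρ (eval₂ (Polynomial.C : F →+* Polynomial F) B f) := by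
      rw [eval_map, ← hρC]
      exact (eval₂_comp_left ρ (Polynomial.C : F →+* Polynomial F) B f).symm
    have u2 : eval (fun i => ρ (B i)) (MvPolynomial.map (algebraMap F (RatFunc F)) g)
        = ρ (eval₂ (Polynomial.C : F →+* Polynomial F) B g) := by
      rw [eval_map, ← hρC]
      exact (eval₂_comp_left ρ (Polynomial.C : F →+* Polynomial F) B g).symm
    rw [u1, u2, eval_C]
    have := congrArg ρ hW0
    rw [map_zero, hW, map_add, map_mul] at this
    rw [show ρ Polynomial.X = RatFunc.X from rfl] at this
    exact this
end
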